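/- (Splitting of bounded BMO functions with rational-square coefficients) Let x = Σ x_I h_I with ‖x‖_BMO ≤ 1 and suppose there exist K ∈ ℕ and integers k_I with x_I² = k_I/K for all dyadic I (so k_I ≤ K). Fix a dyadic interval J and an injection τ on dyadic intervals. Then there exist collections E_1, ..., E_K of dyadic intervals, each satisfying the 3-Carleson condition, with τ(E_i)* ⊆ J for each i, such that (1/K) Σ_{τ(I) ⊆ J} k_I |τ(I)| = (1/K) Σ_{i=1}^K Σ_{I ∈ E_i} |τ(I)|. -/

import Mathlib

open MeasureTheory

/-- A dyadic interval `[k/2^n, (k+1)/2^n)` of `[0,1)`. -/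
structure DI where
  n : ℕ
  k : ℕ
  hk : k < 2 ^ n

namespace DI

/-- The underlying set of a dyadic interval. -/
def carrier (I : DI) : Set ℝ := Set.Ico ((I.k : ℝ) / 2 ^ I.n) ((I.k + 1 : ℝ) / 2 ^ I.n)

/-- The length `|I| = 2^{-n}` of a dyadic interval. -/
noncomputable def len (I : DI) : ENNReal := ENNReal.ofReal ((2 : ℝ)⁻¹ ^ I.n)

end DI

/-- The Carleson sum `∑_{I ∈ L, I ⊆ J} |I|`. -/
noncomputable def carlesonSum (L : Set DI) (J : DI) : ENNReal :=
  ∑' I : {I : DI // I ∈ L ∧ I.carrier ⊆ J.carrier}, I.1.len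

/-- `L` satisfies the `M`-Carleson condition. -/
def CarlesonLE (L : Set DI) (M : ENNReal) : Prop :=
  ∀ J : DI, carlesonSum L J ≤ M * J.len

/-- The Carleson constant `⟦L⟧ = sup_J (1/|J|) ∑_{I ∈ L, I ⊆ J} |I|`. -/
noncomputable def carlesonConst (L : Set DI) : ENNReal :=
  ⨆ J : DI, carlesonSum L J / J.len

/-- The square of the dyadic BMO norm of `x = ∑ x_I h_I`,
`‖x‖² = sup_J (1/|J|) ∑_{I ⊆ J} x_I² |I|`, in terms of the Haar coefficients. -/
noncomputable def bmoSq (x : DI → ℝ) : ENNReal :=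
  ⨆ J : DI, (∑' I : {I : DI // I.carrier ⊆ J.carrier},
      ENNReal.ofReal ((x I.1) ^ 2) * I.1.len) / J.len

/-- `|L*|`: the Lebesgue measure of the set covered by the collection `L`. -/
noncomputable def covMeas (L : Set DI) : ENNReal := volume (⋃ I ∈ L, I.carrier)

/-- `y` is the coefficient function of `Tx` where `T h_I = h_{τ(I)}` and `x` has
coefficients `x_I`. -/
def HaarCompat (τ : DI → DI) (x y : DI → ℝ) : Prop :=
  (∀ I, y (τ I) = x I) ∧ ∀ J, J ∉ Set.range τ → y J = 0

/-- The maximal elements of a collection of dyadic intervals, under inclusion. -/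
def maxSet (S : Set DI) : Set DI :=
  {I | I ∈ S ∧ ∀ K ∈ S, I.carrier ⊆ K.carrier → I = K}

namespace DI

theorem ext' {I J : DI} (h1 : I.n = J.n) (h2 : I.k = J.k) : I = J := by
  cases I; cases J; simp_all

instance : Countable DI := by
  have : Function.Injective (fun I : DI => (I.n, I.k)) := by
    intro I J h; simp at h; exact ext' h.1 h.2
  exact this.countable

theorem mem_carrier {I : DI} {x : ℝ} :
    x ∈ I.carrier ↔ (I.k : ℝ) / 2 ^ I.n ≤ x ∧ x < (I.k + 1 : ℝ) / 2 ^ I.n := Iff.rfl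

theorem carrier_nonempty (I : DI) : I.carrier.Nonempty := by
  refine ⟨(I.k : ℝ) / 2 ^ I.n, le_refl _, ?_⟩
  rw [div_lt_div_iff_of_pos_right (by positivity)]
  linarith

theorem measurable_carrier (I : DI) : MeasurableSet I.carrier := measurableSet_Ico

theorem vol_carrier (I : DI) : volume I.carrier = I.len := by
  rw [carrier, Real.volume_Ico, len]
  congr 1
  rw [div_sub_div_same]
  ring_nf
  rw [one_div]

theorem div_le_div_of_nonneg_right' {a b c : ℝ} (h : a ≤ b) (hc : 0 < c) : a / c ≤ b / c :=
  (div_le_div_iff_of_pos_right hc).mpr h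

theorem len_pos (I : DI) : 0 < I.len := by
  rw [len]; exact ENNReal.ofReal_pos.mpr (by positivity)

theorem len_ne_top (I : DI) : I.len ≠ ⊤ := ENNReal.ofReal_ne_top

theorem level_le_of_subset {I J : DI} (h : I.carrier ⊆ J.carrier) : J.n ≤ I.n := by
  have hv : I.len ≤ J.len := by
    rw [← vol_carrier, ← vol_carrier]; exact measure_mono h
  rw [len, len, ENNReal.ofReal_le_ofReal_iff (by positivity), inv_pow, inv_pow,
    inv_le_inv₀ (by positivity) (by positivity)] at hv
  exact (pow_le_pow_iff_right₀ (by norm_num)).mp hv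

theorem eq_of_same_level {I J : DI} (hn : I.n = J.n) {x : ℝ}
    (hI : x ∈ I.carrier) (hJ : x ∈ J.carrier) : I = J := by
  obtain ⟨hI1, hI2⟩ := hI
  obtain ⟨hJ1, hJ2⟩ := hJ
  rw [hn] at hI1 hI2
  refine ext' hn ?_
  have h2 : (0:ℝ) < 2 ^ J.n := by positivity
  have a1 : (I.k : ℝ) < J.k + 1 := by
    have := lt_of_le_of_lt hI1 hJ2
    rwa [div_lt_div_iff_of_pos_right h2] at this
  have a2 : (J.k : ℝ) < I.k + 1 := by
    have := lt_of_le_of_lt hJ1 hI2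
    rwa [div_lt_div_iff_of_pos_right h2] at this
  have b1 : I.k < J.k + 1 := by exact_mod_cast a1
  have b2 : J.k < I.k + 1 := by exact_mod_cast a2
  omega

theorem subset_of_inter {I J : DI} (hn : J.n ≤ I.n) {x : ℝ}
    (hI : x ∈ I.carrier) (hJ : x ∈ J.carrier) : I.carrier ⊆ J.carrier := by
  obtain ⟨hI1, hI2⟩ := hI
  obtain ⟨hJ1, hJ2⟩ := hJ
  have h2n : (0:ℝ) < 2 ^ I.n := by positivity
  have h2m : (0:ℝ) < 2 ^ J.n := by positivity
  have hpow : (2:ℝ) ^ I.n = 2 ^ (I.n - J.n) * 2 ^ J.n := by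
    rw [← pow_add]; congr 1; omega
  have h2d : (0:ℝ) < 2 ^ (I.n - J.n) := by positivity
  have a1 : ((J.k * 2 ^ (I.n - J.n) : ℕ) : ℝ) ≤ I.k := by
    have h3 : (J.k : ℝ) / 2 ^ J.n < (I.k + 1) / 2 ^ I.n := lt_of_le_of_lt hJ1 hI2
    rw [div_lt_div_iff₀ h2m h2n, hpow] at h3
    have h4 : (J.k : ℝ) * 2 ^ (I.n - J.n) < I.k + 1 := by nlinarith
    have h5 : J.k * 2 ^ (I.n - J.n) < I.k + 1 := by exact_mod_cast h4
    exact_mod_cast Nat.lt_succ_iff.mp h5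
  have a2 : ((I.k : ℝ) + 1) ≤ ((J.k + 1) * 2 ^ (I.n - J.n) : ℕ) := by
    have h3 : (I.k : ℝ) / 2 ^ I.n < (J.k + 1) / 2 ^ J.n := lt_of_le_of_lt hI1 hJ2
    rw [div_lt_div_iff₀ h2n h2m, hpow] at h3
    have h4 : (I.k : ℝ) < (J.k + 1) * 2 ^ (I.n - J.n) := by nlinarith
    have h5 : I.k < (J.k + 1) * 2 ^ (I.n - J.n) := by exact_mod_cast h4
    exact_mod_cast Nat.lt_iff_add_one_le.mp h5
  have key : ∀ a : ℕ, ((a : ℝ)) / 2 ^ J.n = ((a * 2 ^ (I.n - J.n) : ℕ) : ℝ) / 2 ^ I.n := by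
    intro a; push_cast; rw [hpow]; field_simp
  intro y hy
  obtain ⟨hy1, hy2⟩ := hy
  constructor
  · calc (J.k : ℝ) / 2 ^ J.n = ((J.k * 2 ^ (I.n - J.n) : ℕ) : ℝ) / 2 ^ I.n := key J.k
      _ ≤ (I.k : ℝ) / 2 ^ I.n := by exact div_le_div_of_nonneg_right' a1 h2n
      _ ≤ y := hy1
  · calc y < ((I.k : ℝ) + 1) / 2 ^ I.n := hy2
      _ ≤ ((J.k + 1) * 2 ^ (I.n - J.n) : ℕ) / 2 ^ I.n := by
          exact div_le_div_of_nonneg_right' a2 h2n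
      _ = ((J.k : ℝ) + 1) / 2 ^ J.n := by rw [← key (J.k + 1)]; push_cast; ring_nf

def anc (I : DI) (m : ℕ) : DI :=
  ⟨m, I.k / 2 ^ (I.n - m), by
    rcases le_or_gt m I.n with h | h
    · rw [Nat.div_lt_iff_lt_mul (by positivity), ← pow_add]
      have : m + (I.n - m) = I.n := by omega
      rw [this]; exact I.hk
    · have : I.n - m = 0 := by omega
      rw [this, pow_zero, Nat.div_one]
      exact I.hk.trans (Nat.pow_lt_pow_right (by norm_num) h)⟩

@[simp] theorem anc_n (I : DI) (m : ℕ) : (I.anc m).n = m := rfl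

theorem anc_self (I : DI) : I.anc I.n = I := by
  refine ext' rfl ?_
  show I.k / 2 ^ (I.n - I.n) = I.k
  simp

theorem subset_anc (I : DI) {m : ℕ} (h : m ≤ I.n) : I.carrier ⊆ (I.anc m).carrier := by
  set d := I.n - m with hd
  have hdm : I.n = d + m := by omega
  set q := I.k / 2 ^ d with hq
  have h1 : q * 2 ^ d ≤ I.k := Nat.div_mul_le_self _ _
  have h2 : I.k + 1 ≤ (q + 1) * 2 ^ d := by
    have hd0 : 0 < 2 ^ d := by positivity
    have e1 : 2 ^ d * q + I.k % 2 ^ d = I.k := Nat.div_add_mod I.k (2 ^ d)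
    have e2 : I.k % 2 ^ d < 2 ^ d := Nat.mod_lt I.k hd0
    have e3 : (q + 1) * 2 ^ d = 2 ^ d * q + 2 ^ d := by ring
    omega
  intro y hy
  obtain ⟨hy1, hy2⟩ := hy
  have h2n : (0:ℝ) < 2 ^ I.n := by positivity
  have h2m : (0:ℝ) < 2 ^ m := by positivity
  have hpow : (2:ℝ) ^ I.n = 2 ^ d * 2 ^ m := by rw [← pow_add]; congr 1
  constructor
  · show ((q : ℝ)) / 2 ^ m ≤ y
    refine le_trans ?_ hy1
    rw [div_le_div_iff₀ h2m h2n, hpow]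
    have : ((q * 2 ^ d : ℕ) : ℝ) ≤ I.k := by exact_mod_cast h1
    push_cast at this ⊢
    nlinarith
  · show y < ((q : ℝ) + 1) / 2 ^ m
    refine lt_of_lt_of_le hy2 ?_
    rw [div_le_div_iff₀ h2n h2m, hpow]
    have : ((I.k + 1 : ℕ) : ℝ) ≤ ((q + 1) * 2 ^ d : ℕ) := by exact_mod_cast h2
    push_cast at this ⊢
    nlinarith

theorem anc_unique {I A : DI} (h : I.carrier ⊆ A.carrier) : A = I.anc A.n := by
  have hn : A.n ≤ I.n := level_le_of_subset h
  obtain ⟨x, hx⟩ := I.carrier_nonempty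
  exact eq_of_same_level rfl (h hx) (I.subset_anc hn hx)

theorem anc_congr {I A : DI} (h : I.carrier ⊆ A.carrier) {m : ℕ} (hm : m ≤ A.n) :
    I.anc m = A.anc m := by
  have hn : A.n ≤ I.n := level_le_of_subset h
  obtain ⟨x, hx⟩ := I.carrier_nonempty
  exact eq_of_same_level rfl (I.subset_anc (hm.trans hn) hx) (A.subset_anc hm (h hx))

theorem strict_level {I J : DI} (h : I.carrier ⊆ J.carrier) (hne : I ≠ J) : J.n < I.n := by
  rcases lt_or_eq_of_le (level_le_of_subset h) with h' | h'
  · exact h'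
  · obtain ⟨x, hx⟩ := I.carrier_nonempty
    exact absurd (eq_of_same_level h'.symm hx (h hx)) hne

end DI

/-- Cumulative multiplicity along the ancestor chain (strict ancestors). -/
def cum (k : DI → ℕ) (I : DI) : ℕ := ∑ m ∈ Finset.range I.n, k (I.anc m)

theorem cum_split (k : DI → ℕ) {I J' : DI} (h : I.carrier ⊆ J'.carrier) :
    cum k I = cum k J' + ∑ m ∈ Finset.Ico J'.n I.n, k (I.anc m) := by
  have hn : J'.n ≤ I.n := DI.level_le_of_subset h
  have : cum k I = ∑ m ∈ Finset.Ico 0 I.n, k (I.anc m) := by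
    rw [cum, Finset.range_eq_Ico]
  rw [this, ← Finset.sum_Ico_consecutive _ (Nat.zero_le J'.n) hn]
  congr 1
  rw [cum, Finset.range_eq_Ico]
  apply Finset.sum_congr rfl
  intro m hm
  rw [DI.anc_congr h (by simp at hm; omega)]

theorem cum_chain {k : DI → ℕ} {I1 I2 : DI} (h : I2.carrier ⊆ I1.carrier) (hne : I2 ≠ I1) :
    cum k I1 + k I1 ≤ cum k I2 := by
  have hn : I1.n < I2.n := DI.strict_level h hne
  rw [cum_split k h]
  have hmem : I1.n ∈ Finset.Ico I1.n I2.n := by simp [hn]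
  calc cum k I1 + k I1 = cum k I1 + k (I2.anc I1.n) := by rw [← DI.anc_unique h]
    _ ≤ cum k I1 + ∑ m ∈ Finset.Ico I1.n I2.n, k (I2.anc m) := by
        gcongr
        exact Finset.single_le_sum (f := fun m => k (I2.anc m)) (fun m _ => Nat.zero_le _) hmem

/-- The first integer `≥ c` congruent to `i` mod `K` is `i + K * tf K i c`. -/
def tf (K i c : ℕ) : ℕ := if c % K ≤ i then c / K else c / K + 1

theorem tf_ge (K i c : ℕ) (hK : 0 < K) : c ≤ i + K * tf K i c := by
  have h1 := Nat.div_add_mod c K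
  have h2 := Nat.mod_lt c hK
  have h3 : K * (c / K + 1) = K * (c / K) + K := by ring
  rw [tf]
  split <;> omega

theorem tf_le {K i c j : ℕ} (hK : 0 < K) (hj : j % K = i) (hcj : c ≤ j) :
    i + K * tf K i c ≤ j := by
  have hj' : K * (j / K) + i = j := by rw [← hj]; exact Nat.div_add_mod j K
  have h1 := Nat.div_add_mod c K
  have h2 := Nat.mod_lt c hK
  have hi : i < K := by rw [← hj]; exact Nat.mod_lt j hK
  have h3 : K * (c / K + 1) = K * (c / K) + K := by ring
  have hq : c / K ≤ j / K := Nat.div_le_div_right hcj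
  have hq' : K * (c / K) ≤ K * (j / K) := Nat.mul_le_mul_left K hq
  rw [tf]
  split
  · omega
  · have hlt : c / K < j / K := by
      rcases lt_or_ge (c / K) (j / K) with h | h
      · exact h
      · have heq : c / K = j / K := le_antisymm hq h
        rw [heq] at h1
        omega
    have := Nat.mul_le_mul_left K (show c / K + 1 ≤ j / K from hlt)
    omega

/-- Membership in the `i`-th collection. -/
def Esel (K : ℕ) (k : DI → ℕ) (J : DI) (τ : DI → DI) (i : ℕ) : Set DI :=
  {I | (τ I).carrier ⊆ J.carrier ∧ ∃ j, j % K = i ∧ cum k I ≤ j ∧ j < cum k I + k I}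

open Classical in
theorem Esel_sum {K : ℕ} (hK : 0 < K) (k : DI → ℕ) (J : DI) (τ : DI → DI) (I : DI)
    (hkK : k I ≤ K) (F : ENNReal) :
    ∑ i : Fin K, (Esel K k J τ i.val).indicator (fun _ => F) I
      = (if (τ I).carrier ⊆ J.carrier then (k I : ENNReal) * F else 0) := by
  classical
  simp only [Set.indicator_apply]
  by_cases hJ : (τ I).carrier ⊆ J.carrier
  · rw [if_pos hJ, ← Finset.sum_filter]
    have himg : Finset.univ.filter (fun i : Fin K => I ∈ Esel K k J τ i.val)
        = (Finset.Ico (cum k I) (cum k I + k I)).image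
            (fun j => (⟨j % K, Nat.mod_lt j hK⟩ : Fin K)) := by
      ext i
      simp only [Finset.mem_filter, Finset.mem_univ, true_and, Finset.mem_image,
        Finset.mem_Ico, Esel, Set.mem_setOf_eq]
      constructor
      · rintro ⟨-, j, hj1, hj2, hj3⟩
        exact ⟨j, ⟨hj2, hj3⟩, by ext; simp [hj1]⟩
      · rintro ⟨j, ⟨hj2, hj3⟩, rfl⟩
        exact ⟨hJ, j, rfl, hj2, hj3⟩
    have hcard : (Finset.univ.filter (fun i : Fin K => I ∈ Esel K k J τ i.val)).card = k I := by
      rw [himg, Finset.card_image_of_injOn, Nat.card_Ico]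
      · omega
      · intro a ha b hb hab
        simp only [Finset.coe_Ico, Set.mem_Ico] at ha hb
        simp only [Fin.mk.injEq] at hab
        rcases le_or_gt a b with h | h
        · have hd : K ∣ b - a := (Nat.modEq_iff_dvd' h).mp hab
          have hlt : b - a < K := by omega
          have := Nat.eq_zero_of_dvd_of_lt hd hlt
          omega
        · have h' : b ≤ a := h.le
          have hd : K ∣ a - b := (Nat.modEq_iff_dvd' h').mp hab.symm
          have hlt : a - b < K := by omega
          have := Nat.eq_zero_of_dvd_of_lt hd hlt
          omega
    rw [Finset.sum_const, hcard, nsmul_eq_mul]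
  · rw [if_neg hJ]
    apply Finset.sum_eq_zero
    intro i _
    rw [if_neg]
    intro hmem
    exact hJ hmem.1


section Main

variable {x : DI → ℝ} {K : ℕ} {k : DI → ℕ}

/-- Packing: `∑_{A ⊆ J'} k_A |A| ≤ K |J'|`. -/
theorem packing (hx : bmoSq x ≤ 1) (hK : 0 < K) (hk : ∀ I, (x I) ^ 2 = (k I : ℝ) / K)
    (J' : DI) :
    (∑' A : {A : DI // A.carrier ⊆ J'.carrier}, (k A.1 : ENNReal) * A.1.len) ≤ K * J'.len := by
  have h1 : (∑' A : {A : DI // A.carrier ⊆ J'.carrier},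
      ENNReal.ofReal ((x A.1) ^ 2) * A.1.len) ≤ J'.len := by
    have h2 : (∑' A : {A : DI // A.carrier ⊆ J'.carrier},
        ENNReal.ofReal ((x A.1) ^ 2) * A.1.len) / J'.len ≤ 1 :=
      le_trans (le_iSup (fun J'' : DI => (∑' A : {A : DI // A.carrier ⊆ J''.carrier},
        ENNReal.ofReal ((x A.1) ^ 2) * A.1.len) / J''.len) J') hx
    rwa [ENNReal.div_le_iff J'.len_pos.ne' J'.len_ne_top, one_mul] at h2
  have h3 : ∀ A : DI, ENNReal.ofReal ((x A) ^ 2) = (k A : ENNReal) / K := by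
    intro A
    rw [hk A, ENNReal.ofReal_div_of_pos (by exact_mod_cast hK), ENNReal.ofReal_natCast,
      ENNReal.ofReal_natCast]
  have hK0 : (K : ENNReal) ≠ 0 := Nat.cast_ne_zero.mpr hK.ne'
  have hKt : (K : ENNReal) ≠ ⊤ := ENNReal.natCast_ne_top K
  have h4 : (∑' A : {A : DI // A.carrier ⊆ J'.carrier},
      (k A.1 : ENNReal) * A.1.len) / K ≤ J'.len := by
    rw [div_eq_mul_inv, ← ENNReal.tsum_mul_right]
    refine le_trans (le_of_eq (tsum_congr ?_)) h1
    intro A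
    rw [h3 A.1, div_eq_mul_inv, mul_right_comm]
  rw [ENNReal.div_le_iff hK0 hKt] at h4
  rwa [mul_comm]

/-- Coefficient bound `k I ≤ K`. -/
theorem coeff_le (hx : bmoSq x ≤ 1) (hK : 0 < K) (hk : ∀ I, (x I) ^ 2 = (k I : ℝ) / K)
    (I : DI) : k I ≤ K := by
  have h := packing hx hK hk I
  have h1 : (k I : ENNReal) * I.len ≤ (K : ENNReal) * I.len := by
    refine le_trans ?_ h
    exact ENNReal.le_tsum (⟨I, subset_refl _⟩ : {A : DI // A.carrier ⊆ I.carrier})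
  have := ENNReal.mul_le_mul_iff_left I.len_pos.ne' I.len_ne_top |>.mp h1
  exact_mod_cast this

end Main

open Classical in
theorem Esel_carleson {K : ℕ} (hK : 0 < K) {i : ℕ} (hi : i < K) (k : DI → ℕ) (J : DI)
    (τ : DI → DI)
    (hpack : ∀ J' : DI,
      (∑' A : {A : DI // A.carrier ⊆ J'.carrier}, (k A.1 : ENNReal) * A.1.len) ≤ K * J'.len)
    : CarlesonLE (Esel K k J τ i) 3 := by
  intro J'
  classical
  set S : Set DI := {I | I ∈ Esel K k J τ i ∧ I.carrier ⊆ J'.carrier} with hS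
  set T : DI → ℕ := fun I => tf K i (cum k I) with hT
  set t0 : ℕ := tf K i (cum k J') with ht0
  -- basic facts about selected intervals
  have hmod : ∀ t : ℕ, (i + K * t) % K = i := by
    intro t; rw [Nat.add_mul_mod_self_left, Nat.mod_eq_of_lt hi]
  have fsel : ∀ I ∈ S, cum k I ≤ i + K * T I ∧ i + K * T I < cum k I + k I := by
    intro I hI
    obtain ⟨⟨-, j, hj1, hj2, hj3⟩, -⟩ := hI
    exact ⟨tf_ge K i (cum k I) hK, lt_of_le_of_lt (tf_le hK hj1 hj2) hj3⟩
  have ft0 : ∀ I ∈ S, t0 ≤ T I := by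
    intro I hI
    have hsub : I.carrier ⊆ J'.carrier := hI.2
    have hcum : cum k J' ≤ cum k I := by rw [cum_split k hsub]; omega
    have h1 : i + K * t0 ≤ i + K * T I :=
      tf_le hK (hmod (T I)) (hcum.trans (fsel I hI).1)
    have h2 : K * t0 ≤ K * T I := by omega
    exact Nat.le_of_mul_le_mul_left h2 hK
  -- depth bound
  have fdepth : ∀ I ∈ S, ∀ r : ℕ, T I = t0 + r →
      K * r + 1 ≤ (∑ m ∈ Finset.Ico J'.n I.n, k (I.anc m)) + k I := by
    intro I hI r hr
    have hsub : I.carrier ⊆ J'.carrier := hI.2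
    have hcum := cum_split k hsub
    have h2 := (fsel I hI).2
    have h3 : cum k J' ≤ i + K * t0 := tf_ge K i (cum k J') hK
    have h4 : K * T I = K * t0 + K * r := by rw [hr, Nat.mul_add]
    omega
  -- chain: nested distinct selected intervals have different T
  have fchain : ∀ I1 ∈ S, ∀ I2 ∈ S, I2.carrier ⊆ I1.carrier → I2 ≠ I1 → T I1 < T I2 := by
    intro I1 h1 I2 h2 hsub hne
    have hc := cum_chain (k := k) hsub hne
    have e1 := (fsel I1 h1).2
    have e2 := (fsel I2 h2).1
    have : K * T I1 < K * T I2 := by omega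
    exact lt_of_mul_lt_mul_left this (Nat.zero_le K)
  -- same T implies disjoint
  have fdisj : ∀ I1 ∈ S, ∀ I2 ∈ S, I1 ≠ I2 → T I1 = T I2 → Disjoint I1.carrier I2.carrier := by
    intro I1 h1 I2 h2 hne heq
    rw [Set.disjoint_left]
    intro y hy1 hy2
    rcases le_or_gt I1.n I2.n with hn | hn
    · have hsub := DI.subset_of_inter hn hy2 hy1
      exact absurd heq (Nat.ne_of_lt (fchain I1 h1 I2 h2 hsub (fun h => hne h.symm)))
    · have hsub := DI.subset_of_inter hn.le hy1 hy2
      exact absurd heq.symm (Nat.ne_of_lt (fchain I2 h2 I1 h1 hsub (fun h => hne h)))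
  -- the counting function
  set f : ℝ → ENNReal := fun y =>
    ∑' A : DI, if A.carrier ⊆ J'.carrier then A.carrier.indicator (fun _ => (k A : ENNReal)) y
      else 0 with hf
  have hfmeas : Measurable f := by
    apply Measurable.ennreal_tsum
    intro A
    split_ifs
    · exact measurable_const.indicator A.measurable_carrier
    · exact measurable_const
  have hfint : ∫⁻ y, f y ≤ K * J'.len := by
    have hae : ∀ A : DI, Measurable (fun y => if A.carrier ⊆ J'.carrier
        then A.carrier.indicator (fun _ => (k A : ENNReal)) y else 0) := by
      intro A
      split_ifs
      · exact measurable_const.indicator A.measurable_carrier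
      · exact measurable_const
    rw [hf, lintegral_tsum (fun A => (hae A).aemeasurable)]
    have heach : ∀ A : DI, (∫⁻ y, if A.carrier ⊆ J'.carrier
        then A.carrier.indicator (fun _ => (k A : ENNReal)) y else 0)
        = Set.indicator {A : DI | A.carrier ⊆ J'.carrier}
            (fun A => (k A : ENNReal) * A.len) A := by
      intro A
      by_cases h : A.carrier ⊆ J'.carrier
      · have hmem : A ∈ {A : DI | A.carrier ⊆ J'.carrier} := h
        rw [Set.indicator_of_mem hmem]
        simp only [if_pos h]
        rw [lintegral_indicator_const A.measurable_carrier, DI.vol_carrier]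
      · have hmem : A ∉ {A : DI | A.carrier ⊆ J'.carrier} := h
        rw [Set.indicator_of_notMem hmem]
        simp only [if_neg h]
        exact lintegral_zero
    rw [tsum_congr heach, ← tsum_subtype]
    exact hpack J'
  have hflow : ∀ A : DI, A.carrier ⊆ J'.carrier → ∀ y ∈ A.carrier,
      (((∑ m ∈ Finset.Ico J'.n A.n, k (A.anc m)) + k A : ℕ) : ENNReal) ≤ f y := by
    intro A hA y hy
    have hn : J'.n ≤ A.n := DI.level_le_of_subset hA
    have hJ'anc : J' = A.anc J'.n := DI.anc_unique hA
    have hterm : ∀ m ∈ Finset.Icc J'.n A.n,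
        (if (A.anc m).carrier ⊆ J'.carrier
          then (A.anc m).carrier.indicator (fun _ => ((k (A.anc m) : ENNReal))) y else 0)
        = (k (A.anc m) : ENNReal) := by
      intro m hm
      simp only [Finset.mem_Icc] at hm
      have hsubm : A.carrier ⊆ (A.anc m).carrier := A.subset_anc hm.2
      have hysub : y ∈ (A.anc m).carrier := hsubm hy
      have hsubJ : (A.anc m).carrier ⊆ J'.carrier := by
        rw [hJ'anc]
        obtain ⟨z, hz⟩ := A.carrier_nonempty
        exact DI.subset_of_inter (by simpa using hm.1) (hsubm hz) (A.subset_anc hn hz)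
      rw [if_pos hsubJ, Set.indicator_of_mem hysub]
    have e1 : ∑ m ∈ Finset.Icc J'.n A.n, k (A.anc m)
        = (∑ m ∈ Finset.Ico J'.n A.n, k (A.anc m)) + k A := by
      rw [← Finset.Ico_add_one_right_eq_Icc, Finset.sum_Ico_succ_top hn, A.anc_self]
    have hinjF : Set.InjOn A.anc (Finset.Icc J'.n A.n) := by
      intro a _ b _ h
      have := congrArg DI.n h
      simpa using this
    set F := (Finset.Icc J'.n A.n).image A.anc with hF
    have e3 : ∑ B ∈ F, (if B.carrier ⊆ J'.carrier
          then B.carrier.indicator (fun _ => ((k B : ENNReal))) y else 0)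
        = ∑ m ∈ Finset.Icc J'.n A.n, (k (A.anc m) : ENNReal) := by
      rw [hF, Finset.sum_image (fun a ha b hb h => hinjF ha hb h)]
      exact Finset.sum_congr rfl fun m hm => hterm m hm
    have e4 := ENNReal.sum_le_tsum (f := fun B : DI => if B.carrier ⊆ J'.carrier
        then B.carrier.indicator (fun _ => ((k B : ENNReal))) y else 0) F
    rw [e3] at e4
    refine le_trans (le_of_eq ?_) e4
    rw [← e1]
    push_cast
    rfl
  -- level sets
  set L : ℕ → Set ℝ := fun u => {y | (u : ENNReal) + 1 ≤ f y} with hL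
  have hLmeas : ∀ u, MeasurableSet (L u) := by
    intro u
    exact measurableSet_le measurable_const hfmeas
  have hLanti : ∀ u v : ℕ, u ≤ v → L v ⊆ L u := by
    intro u v huv y hy
    simp only [hL, Set.mem_setOf_eq] at hy ⊢
    refine le_trans ?_ hy
    gcongr ?_ + 1
    exact_mod_cast huv

  have hlayer : ∑' u : ℕ, volume (L u) ≤ K * J'.len := by
    have hpoint : ∀ y, (∑' u : ℕ, (L u).indicator (fun _ => (1:ENNReal)) y) ≤ f y := by
      intro y
      rw [ENNReal.tsum_eq_iSup_sum]
      apply iSup_le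
      intro s
      set s' := s.filter (fun u => y ∈ L u) with hs'
      have hsum : ∑ u ∈ s, (L u).indicator (fun _ => (1:ENNReal)) y = s'.card := by
        have hind : ∀ u ∈ s, (L u).indicator (fun _ => (1:ENNReal)) y
            = if y ∈ L u then 1 else 0 := fun u _ => Set.indicator_apply _ _ _
        rw [Finset.sum_congr rfl hind, ← Finset.sum_filter, Finset.sum_const, nsmul_eq_mul,
          mul_one]
      rw [hsum]
      rcases Finset.eq_empty_or_nonempty s' with he | hne
      · simp [he]
      · have hM := s'.max'_mem hne
        set M := s'.max' hne with hMdef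
        have hMle : (M : ENNReal) + 1 ≤ f y := (Finset.mem_filter.mp hM).2
        have hsub : s' ⊆ Finset.range (M + 1) := fun u hu =>
          Finset.mem_range.mpr (Nat.lt_succ_of_le (Finset.le_max' s' u hu))
        have hcard : s'.card ≤ M + 1 :=
          le_trans (Finset.card_le_card hsub) (by simp)
        calc (s'.card : ENNReal) ≤ ((M + 1 : ℕ) : ENNReal) := by exact_mod_cast hcard
          _ = (M : ENNReal) + 1 := by push_cast; rfl
          _ ≤ f y := hMle
    calc ∑' u : ℕ, volume (L u)
        = ∑' u : ℕ, ∫⁻ y, (L u).indicator (fun _ => (1:ENNReal)) y := by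
          refine tsum_congr fun u => ?_
          rw [lintegral_indicator_const (hLmeas u), one_mul]
      _ = ∫⁻ y, ∑' u : ℕ, (L u).indicator (fun _ => (1:ENNReal)) y :=
          (lintegral_tsum fun u =>
            (measurable_const.indicator (hLmeas u)).aemeasurable).symm
      _ ≤ ∫⁻ y, f y := lintegral_mono hpoint
      _ ≤ K * J'.len := hfint
  -- the pieces
  set Sr : ℕ → Set DI := fun r => {I | I ∈ S ∧ T I = t0 + r} with hSr
  have hvolr : ∀ r : ℕ, (∑' I : ↥(Sr r), I.1.len) = volume (⋃ I : ↥(Sr r), I.1.carrier) := by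
    intro r
    rw [measure_iUnion]
    · exact tsum_congr fun I => (DI.vol_carrier I.1).symm
    · intro I1 I2 hne
      exact fdisj I1.1 I1.2.1 I2.1 I2.2.1 (fun h => hne (Subtype.ext h))
        (by rw [I1.2.2, I2.2.2])
    · exact fun I => I.1.measurable_carrier
  have hU0 : volume (⋃ I : ↥(Sr 0), I.1.carrier) ≤ J'.len := by
    rw [← DI.vol_carrier]
    apply measure_mono
    exact Set.iUnion_subset fun I => I.2.1.2
  have hUr : ∀ r : ℕ, volume (⋃ I : ↥(Sr (r + 1)), I.1.carrier) ≤ volume (L (K * (r + 1))) := by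
    intro r
    apply measure_mono
    apply Set.iUnion_subset
    intro I y hy
    have hI : I.1 ∈ S := I.2.1
    have hd := fdepth I.1 hI (r + 1) I.2.2
    have := hflow I.1 hI.2 y hy
    refine le_trans ?_ this
    have : ((K * (r + 1) + 1 : ℕ) : ENNReal)
        ≤ (((∑ m ∈ Finset.Ico J'.n I.1.n, k (I.1.anc m)) + k I.1 : ℕ) : ENNReal) := by
      exact_mod_cast hd
    refine le_trans (le_of_eq ?_) this
    push_cast
    ring
  -- decompose the Carleson sum
  have hdecomp : carlesonSum (Esel K k J τ i) J' = ∑' r : ℕ, ∑' I : ↥(Sr r), I.1.len := by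
    have h1 : carlesonSum (Esel K k J τ i) J' = ∑' I : ↥S, I.1.len := rfl
    have h2 : ∀ I : DI, S.indicator DI.len I = ∑' r : ℕ, (Sr r).indicator DI.len I := by
      intro I
      by_cases hI : I ∈ S
      · have hge := ft0 I hI
        rw [Set.indicator_of_mem hI]
        rw [tsum_eq_single (T I - t0) ?_]
        · rw [Set.indicator_of_mem (show I ∈ Sr (T I - t0) from ⟨hI, by omega⟩)]
        · intro r hr'
          apply Set.indicator_of_notMem
          intro hmem
          exact hr' (by have := hmem.2; omega)
      · rw [Set.indicator_of_notMem hI]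
        symm
        apply ENNReal.tsum_eq_zero.mpr
        intro r
        exact Set.indicator_of_notMem (fun hmem => hI hmem.1) _
    rw [h1, tsum_subtype, tsum_congr h2, ENNReal.tsum_comm]
    exact tsum_congr fun r => (tsum_subtype (Sr r) DI.len).symm
  -- final chain
  have hK0 : (K : ENNReal) ≠ 0 := Nat.cast_ne_zero.mpr hK.ne'
  have hKt : (K : ENNReal) ≠ ⊤ := ENNReal.natCast_ne_top K
  have htail : ∑' r : ℕ, volume (L (K * (r + 1))) ≤ J'.len := by
    haveI : NeZero K := ⟨hK.ne'⟩
    have hmul : (K : ENNReal) * ∑' r : ℕ, volume (L (K * (r + 1))) ≤ (K : ENNReal) * J'.len := by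
      calc (K : ENNReal) * ∑' r : ℕ, volume (L (K * (r + 1)))
          = ∑' r : ℕ, (K : ENNReal) * volume (L (K * (r + 1))) := ENNReal.tsum_mul_left.symm
        _ = ∑' r : ℕ, ∑ _j : Fin K, volume (L (K * (r + 1))) := by
            refine tsum_congr fun r => ?_
            rw [Finset.sum_const, Finset.card_univ, Fintype.card_fin, nsmul_eq_mul]
        _ ≤ ∑' r : ℕ, ∑ j : Fin K, volume (L (r * K + (j : ℕ))) := by
            refine ENNReal.tsum_le_tsum fun r => Finset.sum_le_sum fun j _ => ?_
            refine measure_mono (hLanti _ _ ?_)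
            have hj := j.isLt
            have h1 : r * K + (j : ℕ) ≤ r * K + K := by omega
            have heq : r * K + K = K * (r + 1) := by ring
            omega
        _ = ∑' r : ℕ, ∑' j : Fin K, volume (L (r * K + (j : ℕ))) := by
            exact tsum_congr fun r => (tsum_fintype _).symm
        _ = ∑' p : ℕ × Fin K, volume (L (p.1 * K + (p.2 : ℕ))) := ENNReal.tsum_prod.symm
        _ = ∑' u : ℕ, volume (L u) := by
            have := Equiv.tsum_eq (Nat.divModEquiv K).symm (fun u => volume (L u))
            rw [← this]
            exact tsum_congr fun p => by rw [Nat.divModEquiv_symm_apply]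
        _ ≤ (K : ENNReal) * J'.len := hlayer
    exact (ENNReal.mul_le_mul_iff_right hK0 hKt).mp hmul
  rw [hdecomp, tsum_eq_zero_add' ENNReal.summable]
  calc (∑' I : ↥(Sr 0), I.1.len) + ∑' r : ℕ, ∑' I : ↥(Sr (r + 1)), I.1.len
      ≤ J'.len + ∑' r : ℕ, volume (L (K * (r + 1))) := by
        gcongr
        · rw [hvolr 0]; exact hU0
        · rw [hvolr (r + 1)]; exact hUr r
    _ ≤ J'.len + J'.len := by gcongr
    _ = 2 * J'.len := (two_mul _).symm
    _ ≤ 3 * J'.len := by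
        gcongr
        norm_num



/-- Splitting of bounded BMO functions with rational-square coefficients into `K`
collections each satisfying the `3`-Carleson condition. -/
theorem stmt10 (x : DI → ℝ) (hx : bmoSq x ≤ 1)
    (K : ℕ) (hK : 0 < K) (k : DI → ℕ) (hk : ∀ I, (x I) ^ 2 = (k I : ℝ) / K)
    (J : DI) (τ : DI → DI) (hτ : Function.Injective τ) :
    ∃ E : Fin K → Set DI,
      (∀ i, CarlesonLE (E i) 3) ∧
      (∀ i, ∀ I ∈ E i, (τ I).carrier ⊆ J.carrier) ∧
      (1 / (K : ENNReal)) *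
          ∑' I : {I : DI // (τ I).carrier ⊆ J.carrier}, (k I.1 : ENNReal) * (τ I.1).len
        = (1 / (K : ENNReal)) * ∑ i : Fin K, ∑' I : E i, (τ I.1).len := by
  classical
  have hkK : ∀ I, k I ≤ K := coeff_le hx hK hk
  have hpack := packing hx hK hk
  refine ⟨fun i => Esel K k J τ i.val, ?_, ?_, ?_⟩
  · intro i
    exact Esel_carleson hK i.isLt k J τ hpack
  · intro i I hI
    exact hI.1
  · congr 1
    calc ∑' I : {I : DI // (τ I).carrier ⊆ J.carrier}, (k I.1 : ENNReal) * (τ I.1).len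
        = ∑' I : DI, Set.indicator {I : DI | (τ I).carrier ⊆ J.carrier}
            (fun I => (k I : ENNReal) * (τ I).len) I := by
          exact tsum_subtype {I : DI | (τ I).carrier ⊆ J.carrier}
            (fun I => (k I : ENNReal) * (τ I).len)
      _ = ∑' I : DI, ∑ i : Fin K,
            (Esel K k J τ i.val).indicator (fun I' => (τ I').len) I := by
          refine tsum_congr fun I => ?_
          have h1 : ∀ i : Fin K, (Esel K k J τ i.val).indicator (fun I' => (τ I').len) I
              = (Esel K k J τ i.val).indicator (fun _ => (τ I).len) I := by
            intro i
            by_cases h : I ∈ Esel K k J τ i.val <;> simp [h]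
          rw [Finset.sum_congr rfl fun i _ => h1 i,
            Esel_sum hK k J τ I (hkK I) ((τ I).len), Set.indicator_apply]
          simp only [Set.mem_setOf_eq]
      _ = ∑ i : Fin K, ∑' I : DI,
            (Esel K k J τ i.val).indicator (fun I' => (τ I').len) I :=
          Summable.tsum_finsetSum fun i _ => ENNReal.summable
      _ = ∑ i : Fin K, ∑' I : ↥(Esel K k J τ i.val), (τ I.1).len :=
          Finset.sum_congr rfl fun i _ => (tsum_subtype _ _).symm
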